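/- With A = R + φ(A*)^{-1}L + ((φ-1)/(q-1))(A*)^{-1} and y^{↓↓} = ∑_{z ≤ y} ẑ, one has A y^{↓↓} = ((φ q^{dim y} - q^{N - dim y})/(q-1)) y^{↓↓} + ∑_{z covers y} z^{↓↓} for every subspace y. -/

import Mathlib

set_option linter.unusedSectionVars false
set_option maxHeartbeats 1000000
set_option synthInstance.maxHeartbeats 400000


open Matrix

noncomputable section
open scoped Classical

variable (F : Type) [Field F] [Fintype F] (N : ℕ)

/-- The vertex set: all subspaces of the `N`-dimensional vector space over `GF(q)`. -/
abbrev X := Submodule F (Fin N → F)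

noncomputable instance : Fintype (X F N) := Fintype.ofFinite _

/-- The dimension of a subspace. -/
def dimS (y : X F N) : ℕ := Module.finrank F y

/-- `y` covers `z` : `z ⊆ y` and `dim y = dim z + 1`. -/
def Covers (y z : X F N) : Prop := z ≤ y ∧ dimS F N y = dimS F N z + 1

/-- The raising matrix `R`. -/
def R : Matrix (X F N) (X F N) ℂ := fun y z => if Covers F N y z then 1 else 0

/-- The lowering matrix `L = Rᵗ`. -/
def L : Matrix (X F N) (X F N) ℂ := (R F N)ᵀ

/-- The diagonal matrix `A*` with `(y,y)`-entry `q^{-dim y}`. -/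
def Astar : Matrix (X F N) (X F N) ℂ :=
  Matrix.diagonal fun y => (Fintype.card F : ℂ) ^ (-(dimS F N y : ℤ))


/-- `y^{↓↓} = ∑_{z ≤ y} ẑ` in `V = ℂ^X`. -/
def dd (y : X F N) : X F N → ℂ :=
  ∑ z ∈ Finset.univ.filter (fun z : X F N => z ≤ y), Pi.single z (1 : ℂ)

lemma st18_dimS_le {x y : X F N} (h : x ≤ y) : dimS F N x ≤ dimS F N y :=
  Submodule.finrank_mono h

lemma st18_dimS_top : dimS F N ⊤ = N := by
  rw [dimS, finrank_top, Module.finrank_pi, Fintype.card_fin]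

lemma st18_dimS_le_N (x : X F N) : dimS F N x ≤ N := by
  simpa [st18_dimS_top] using st18_dimS_le F N (le_top : x ≤ ⊤)

lemma st18_card_mem (w : X F N) :
    (Finset.univ.filter fun v : Fin N → F => v ∈ w).card = Fintype.card F ^ dimS F N w := by
  rw [← Fintype.card_subtype]
  exact Module.card_eq_pow_finrank (K := F)

lemma st18_card_sdiff {x w : X F N} (hxw : x ≤ w) :
    (Finset.univ.filter fun v : Fin N → F => v ∈ w ∧ v ∉ x).card
      = Fintype.card F ^ dimS F N w - Fintype.card F ^ dimS F N x := by
  have h1 : (Finset.univ.filter fun v : Fin N → F => v ∈ w ∧ v ∉ x)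
      = (Finset.univ.filter fun v : Fin N → F => v ∈ w) \
        (Finset.univ.filter fun v : Fin N → F => v ∈ x) := by
    ext v
    simp only [Finset.mem_filter, Finset.mem_sdiff, Finset.mem_univ, true_and]
  have h2 : (Finset.univ.filter fun v : Fin N → F => v ∈ x)
      ⊆ (Finset.univ.filter fun v : Fin N → F => v ∈ w) := by
    intro v hv
    simp only [Finset.mem_filter, Finset.mem_univ, true_and] at hv ⊢
    exact hxw hv
  rw [h1, Finset.card_sdiff_of_subset h2, st18_card_mem, st18_card_mem]

lemma st18_dimS_sup_span {x : X F N} {v : Fin N → F} (hv : v ∉ x) :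
    dimS F N (x ⊔ Submodule.span F {v}) = dimS F N x + 1 := by
  have hv0 : v ≠ 0 := fun h => hv (h ▸ x.zero_mem)
  have h1 : Module.finrank F (Submodule.span F {v}) = 1 := finrank_span_singleton hv0
  have hinf : x ⊓ Submodule.span F {v} = ⊥ := by
    rw [eq_bot_iff]
    rintro u ⟨hux, hus⟩
    obtain ⟨a, rfl⟩ := Submodule.mem_span_singleton.mp hus
    rcases eq_or_ne a 0 with rfl | ha
    · simpa using Submodule.zero_mem _
    · exact absurd (by simpa [smul_smul, inv_mul_cancel₀ ha] using x.smul_mem a⁻¹ hux) hv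
  have key := Submodule.finrank_sup_add_finrank_inf_eq x (Submodule.span F {v})
  rw [hinf, h1] at key
  simpa [dimS, finrank_bot] using key

lemma st18_card_one_step {x y : X F N} (hxy : x ≤ y) :
    (Finset.univ.filter fun z : X F N =>
        x ≤ z ∧ z ≤ y ∧ dimS F N z = dimS F N x + 1).card
        * (Fintype.card F ^ (dimS F N x + 1) - Fintype.card F ^ dimS F N x)
      = Fintype.card F ^ dimS F N y - Fintype.card F ^ dimS F N x := by
  classical
  set S := Finset.univ.filter fun z : X F N =>
      x ≤ z ∧ z ≤ y ∧ dimS F N z = dimS F N x + 1 with hS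
  have hmap : ∀ v ∈ (Finset.univ.filter fun v : Fin N → F => v ∈ y ∧ v ∉ x),
      (x ⊔ Submodule.span F {v}) ∈ S := by
    intro v hv
    simp only [Finset.mem_filter, Finset.mem_univ, true_and] at hv
    simp only [hS, Finset.mem_filter, Finset.mem_univ, true_and]
    refine ⟨le_sup_left, sup_le hxy ?_, st18_dimS_sup_span F N hv.2⟩
    rw [Submodule.span_le, Set.singleton_subset_iff]
    exact hv.1
  have key := Finset.card_eq_sum_card_fiberwise hmap
  have hfib : ∀ z ∈ S,
      ((Finset.univ.filter fun v : Fin N → F => v ∈ y ∧ v ∉ x).filter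
        (fun v => x ⊔ Submodule.span F {v} = z))
      = (Finset.univ.filter fun v : Fin N → F => v ∈ z ∧ v ∉ x) := by
    intro z hz
    simp only [hS, Finset.mem_filter, Finset.mem_univ, true_and] at hz
    obtain ⟨hxz, hzy, hdz⟩ := hz
    ext v
    simp only [Finset.mem_filter, Finset.mem_univ, true_and]
    constructor
    · rintro ⟨⟨hvy, hvx⟩, hgv⟩
      refine ⟨?_, hvx⟩
      rw [← hgv]
      exact le_sup_right (α := X F N) (Submodule.mem_span_singleton_self v)
    · rintro ⟨hvz, hvx⟩
      have hle : x ⊔ Submodule.span F {v} ≤ z := by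
        refine sup_le hxz ?_
        rw [Submodule.span_le, Set.singleton_subset_iff]
        exact hvz
      have heq : x ⊔ Submodule.span F {v} = z :=
        Submodule.eq_of_le_of_finrank_le hle
          (le_of_eq (hdz.trans (st18_dimS_sup_span F N hvx).symm))
      exact ⟨⟨hzy hvz, hvx⟩, heq⟩
  rw [Finset.sum_congr rfl (fun z hz => by rw [hfib z hz])] at key
  have hcards : ∀ z ∈ S,
      (Finset.univ.filter fun v : Fin N → F => v ∈ z ∧ v ∉ x).card
        = Fintype.card F ^ (dimS F N x + 1) - Fintype.card F ^ dimS F N x := by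
    intro z hz
    simp only [hS, Finset.mem_filter, Finset.mem_univ, true_and] at hz
    rw [st18_card_sdiff F N hz.1, hz.2.2]
  rw [Finset.sum_congr rfl hcards, Finset.sum_const, smul_eq_mul] at key
  rw [← key, st18_card_sdiff F N hxy]

lemma st18_card_hyperplanes (x : X F N) :
    (Finset.univ.filter fun z : X F N =>
        z ≤ x ∧ dimS F N z + 1 = dimS F N x).card * (Fintype.card F - 1)
      = Fintype.card F ^ dimS F N x - 1 := by
  classical
  haveI : Finite (Module.Dual F ↥x) :=
    Finite.of_injective _ (DFunLike.coe_injective (F := Module.Dual F ↥x))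
  haveI : Fintype (Module.Dual F ↥x) := Fintype.ofFinite _
  set S := Finset.univ.filter fun z : X F N =>
      z ≤ x ∧ dimS F N z + 1 = dimS F N x with hS
  set T := Finset.univ.filter fun f : Module.Dual F ↥x => f ≠ 0 with hT
  -- cardinality of T
  have hcardDual : Fintype.card (Module.Dual F ↥x) = Fintype.card F ^ dimS F N x := by
    rw [Module.card_eq_pow_finrank (K := F), Subspace.dual_finrank_eq]
    rfl
  have hTcard : T.card = Fintype.card F ^ dimS F N x - 1 := by
    rw [hT, Finset.filter_ne', Finset.card_erase_of_mem (Finset.mem_univ _),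
      Finset.card_univ, hcardDual]
  -- rank of kernels
  have hker : ∀ f : Module.Dual F ↥x, f ≠ 0 →
      Module.finrank F (LinearMap.ker f) + 1 = dimS F N x := by
    intro f hf
    have hrtop : LinearMap.range f = ⊤ := by
      obtain ⟨w, hw⟩ := DFunLike.ne_iff.mp hf
      have hw' : f w ≠ 0 := by simpa using hw
      rw [eq_top_iff]
      intro a _
      refine ⟨(a * (f w)⁻¹) • w, ?_⟩
      simp [_root_.map_smul, smul_eq_mul, mul_assoc, inv_mul_cancel₀ hw']
    have hrange : Module.finrank F (LinearMap.range f) = 1 := by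
      rw [hrtop, finrank_top, Module.finrank_self]
    have := LinearMap.finrank_range_add_finrank_ker f
    rw [hrange] at this
    unfold dimS; omega
  -- the fiber map
  have hmap : ∀ f ∈ T, Submodule.map x.subtype (LinearMap.ker f) ∈ S := by
    intro f hf
    rw [hT, Finset.mem_filter] at hf
    have hfr : dimS F N (Submodule.map x.subtype (LinearMap.ker f))
        = Module.finrank F (LinearMap.ker f) := by
      unfold dimS
      exact Submodule.finrank_map_subtype_eq x _
    rw [hS, Finset.mem_filter]
    exact ⟨Finset.mem_univ _, Submodule.map_subtype_le x _, by rw [hfr]; exact hker f hf.2⟩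
  have key := Finset.card_eq_sum_card_fiberwise hmap
  have hfib : ∀ z ∈ S,
      (T.filter (fun f => Submodule.map x.subtype (LinearMap.ker f) = z)).card
        = Fintype.card F - 1 := by
    intro z hz
    rw [hS, Finset.mem_filter] at hz
    obtain ⟨-, hzx, hdz⟩ := hz
    set z' : Submodule F ↥x := Submodule.comap x.subtype z with hz'
    have hmapz : Submodule.map x.subtype z' = z := by
      rw [hz', Submodule.map_comap_subtype, inf_eq_right.mpr hzx]
    have hz'rank : Module.finrank F z' + 1 = dimS F N x := by
      have : Module.finrank F z' = dimS F N z := by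
        rw [← hmapz]; exact (Submodule.finrank_map_subtype_eq x _).symm
      rw [this]; exact hdz
    -- the fiber is the set of nonzero functionals annihilating z'
    have hfibeq : T.filter (fun f => Submodule.map x.subtype (LinearMap.ker f) = z)
        = Finset.univ.filter
            (fun f : Module.Dual F ↥x => f ∈ Submodule.dualAnnihilator z' ∧ f ≠ 0) := by
      ext f
      rw [hT]
      simp only [Finset.mem_filter, Finset.mem_univ, true_and]
      constructor
      · rintro ⟨hf0, hfz⟩
        refine ⟨?_, hf0⟩
        rw [Submodule.mem_dualAnnihilator]
        intro w hw
        have hkerz : LinearMap.ker f = z' := by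
          have := congrArg (Submodule.comap x.subtype) hfz
          rwa [Submodule.comap_map_eq_of_injective x.injective_subtype] at this
        rw [← hkerz] at hw
        exact hw
      · rintro ⟨hfann, hf0⟩
        refine ⟨hf0, ?_⟩
        have hle : z' ≤ LinearMap.ker f := by
          intro w hw
          exact (Submodule.mem_dualAnnihilator f).mp hfann w hw
        have hkerz : z' = LinearMap.ker f := by
          apply Submodule.eq_of_le_of_finrank_le hle
          have h1 := hker f hf0
          omega
        rw [← hkerz, hmapz]
    rw [hfibeq]
    -- count nonzero elements of the annihilator, which has dimension 1
    have hannrank : Module.finrank F (Submodule.dualAnnihilator z') = 1 := by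
      have hq : Module.finrank F (↥x ⧸ z')
          = Module.finrank F (Submodule.dualAnnihilator z') :=
        LinearEquiv.finrank_eq (Subspace.quotEquivAnnihilator z')
      have hq2 := Submodule.finrank_quotient_add_finrank z'
      rw [hq] at hq2
      have : Module.finrank F ↥x = dimS F N x := rfl
      omega
    haveI : Finite ↥(Submodule.dualAnnihilator z') := Subtype.finite
    have hanncard : (Finset.univ.filter
        (fun f : Module.Dual F ↥x => f ∈ Submodule.dualAnnihilator z')).card
        = Fintype.card F := by
      rw [← Fintype.card_subtype]
      have := Module.card_eq_pow_finrank (K := F) (V := ↥(Submodule.dualAnnihilator z'))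
      rw [hannrank, pow_one] at this
      exact this
    have hsplit : Finset.univ.filter
          (fun f : Module.Dual F ↥x => f ∈ Submodule.dualAnnihilator z' ∧ f ≠ 0)
        = (Finset.univ.filter
            (fun f : Module.Dual F ↥x => f ∈ Submodule.dualAnnihilator z')).erase 0 := by
      ext f
      simp only [Finset.mem_filter, Finset.mem_univ, true_and, Finset.mem_erase]
      tauto
    rw [hsplit, Finset.card_erase_of_mem, hanncard]
    simp only [Finset.mem_filter, Finset.mem_univ, true_and]
    exact Submodule.zero_mem _
  rw [Finset.sum_congr rfl hfib, Finset.sum_const, smul_eq_mul] at key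
  rw [← key, hTcard]

lemma st18_dimS_inf_lt {x y : X F N} (h : ¬ x ≤ y) :
    dimS F N (x ⊓ y) < dimS F N x := by
  have hle : dimS F N (x ⊓ y) ≤ dimS F N x := st18_dimS_le F N inf_le_left
  rcases lt_or_eq_of_le hle with hlt | heq
  · exact hlt
  · exfalso
    have : x ⊓ y = x := Submodule.eq_of_le_of_finrank_le inf_le_left (le_of_eq heq.symm)
    exact h (this ▸ inf_le_right)

lemma st18_case2 {x y : X F N} (h : ¬ x ≤ y) :
    (Finset.univ.filter fun z : X F N => z ≤ y ∧ Covers F N x z).card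
      = (Finset.univ.filter fun z : X F N => Covers F N z y ∧ x ≤ z).card := by
  classical
  have helt := st18_dimS_inf_lt F N h
  have hsup : dimS F N (x ⊔ y) + dimS F N (x ⊓ y) = dimS F N x + dimS F N y :=
    Submodule.finrank_sup_add_finrank_inf_eq x y
  by_cases hcase : dimS F N (x ⊓ y) + 1 = dimS F N x
  · have h1 : (Finset.univ.filter fun z : X F N => z ≤ y ∧ Covers F N x z) = {x ⊓ y} := by
      ext z
      simp only [Finset.mem_filter, Finset.mem_univ, true_and, Finset.mem_singleton]
      simp only [Covers]
      constructor
      · rintro ⟨hzy, hzx, hdz⟩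
        refine Submodule.eq_of_le_of_finrank_le (le_inf hzx hzy) ?_
        show dimS F N (x ⊓ y) ≤ dimS F N z
        omega
      · rintro rfl
        exact ⟨inf_le_right, inf_le_left, hcase.symm⟩
    have hds : dimS F N (x ⊔ y) = dimS F N y + 1 := by omega
    have h2 : (Finset.univ.filter fun z : X F N => Covers F N z y ∧ x ≤ z) = {x ⊔ y} := by
      ext z
      simp only [Finset.mem_filter, Finset.mem_univ, true_and, Finset.mem_singleton]
      simp only [Covers]
      constructor
      · rintro ⟨⟨hyz, hdz⟩, hxz⟩
        refine (Submodule.eq_of_le_of_finrank_le (sup_le hxz hyz) ?_).symm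
        show dimS F N z ≤ dimS F N (x ⊔ y)
        omega
      · rintro rfl
        exact ⟨⟨le_sup_right, hds⟩, le_sup_left⟩
    rw [h1, h2]
    simp
  · have h1 : (Finset.univ.filter fun z : X F N => z ≤ y ∧ Covers F N x z) = ∅ := by
      ext z
      simp only [Finset.mem_filter, Finset.mem_univ, true_and, Finset.notMem_empty,
        iff_false]
      simp only [Covers, not_and]
      intro hzy hzx hdz
      have : dimS F N z ≤ dimS F N (x ⊓ y) := st18_dimS_le F N (le_inf hzx hzy)
      omega
    have h2 : (Finset.univ.filter fun z : X F N => Covers F N z y ∧ x ≤ z) = ∅ := by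
      ext z
      simp only [Finset.mem_filter, Finset.mem_univ, true_and, Finset.notMem_empty,
        iff_false]
      simp only [Covers, not_and]
      rintro ⟨hyz, hdz⟩ hxz
      have : dimS F N (x ⊔ y) ≤ dimS F N z := st18_dimS_le F N (sup_le hxz hyz)
      omega
    rw [h1, h2]

lemma st18_dd_apply (y z : X F N) : dd F N y z = if z ≤ y then (1:ℂ) else 0 := by
  unfold dd
  rw [Finset.sum_apply]
  simp only [Pi.single_apply]
  rw [Finset.sum_ite_eq (Finset.univ.filter fun w : X F N => w ≤ y) z (fun _ => (1:ℂ))]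
  simp

lemma st18_Astar_inv : (Astar F N)⁻¹
    = Matrix.diagonal (fun z : X F N => (Fintype.card F : ℂ) ^ (dimS F N z : ℤ)) := by
  apply Matrix.inv_eq_right_inv
  rw [Astar, Matrix.diagonal_mul_diagonal]
  have hq0 : (Fintype.card F : ℂ) ≠ 0 := by
    exact_mod_cast Fintype.card_ne_zero
  ext i j
  rw [Matrix.diagonal_apply, Matrix.one_apply]
  by_cases hij : i = j
  · simp [hij, _root_.zpow_neg, inv_mul_cancel₀ (zpow_ne_zero _ hq0)]
  · simp [hij]

/-- With `A = R + φ(A*)⁻¹L + ((φ-1)/(q-1))(A*)⁻¹`: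
`A y^{↓↓} = ((φ q^{dim y} - q^{N - dim y})/(q-1)) y^{↓↓} + ∑_{z covers y} z^{↓↓}`. -/
theorem stmt_18 (hN : 1 ≤ N) (φ : ℝ) (hφ : 0 < φ) :
    let q : ℂ := (Fintype.card F : ℂ)
    let A : Matrix (X F N) (X F N) ℂ :=
      R F N + (φ : ℂ) • ((Astar F N)⁻¹ * L F N) +
        (((φ : ℂ) - 1) / (q - 1)) • (Astar F N)⁻¹
    ∀ y : X F N,
      A.mulVec (dd F N y) =
        (((φ : ℂ) * q ^ (dimS F N y) - q ^ (N - dimS F N y)) / (q - 1)) • dd F N y +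
          ∑ z ∈ Finset.univ.filter (fun z : X F N => Covers F N z y), dd F N z := by
  intro q A y
  have hq2 : 1 < Fintype.card F := Fintype.one_lt_card
  have hq0 : (Fintype.card F : ℂ) ≠ 0 := by exact_mod_cast Fintype.card_ne_zero
  have hq1 : (Fintype.card F : ℂ) - 1 ≠ 0 := by
    rw [sub_ne_zero]
    exact_mod_cast Nat.ne_of_gt hq2
  funext x
  set c : ℂ := (Fintype.card F : ℂ) with hc
  set d : ℕ := dimS F N x with hd
  set m : ℕ := dimS F N y with hm
  -- entrywise formula for A
  have hA : ∀ z, A x z =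
      (if Covers F N x z then (1:ℂ) else 0)
      + (φ:ℂ) * (c ^ (d:ℤ) * (if Covers F N z x then 1 else 0))
      + (((φ:ℂ) - 1) / (c - 1)) * (if x = z then c ^ (d:ℤ) else 0) := by
    intro z
    show (R F N + (φ : ℂ) • ((Astar F N)⁻¹ * L F N) +
        (((φ : ℂ) - 1) / (c - 1)) • (Astar F N)⁻¹) x z = _
    simp only [Matrix.add_apply, Matrix.smul_apply, st18_Astar_inv, Matrix.diagonal_mul,
      L, Matrix.transpose_apply, R, Matrix.diagonal_apply, smul_eq_mul]
    rfl
  have hmv : A.mulVec (dd F N y) x = ∑ z : X F N, A x z * dd F N y z := rfl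
  -- the three sums
  have e1 : ∑ z : X F N, (if Covers F N x z then (1:ℂ) else 0) * (if z ≤ y then 1 else 0)
      = ((Finset.univ.filter fun z : X F N => z ≤ y ∧ Covers F N x z).card : ℂ) := by
    rw [← Finset.sum_boole]
    apply Finset.sum_congr rfl
    intro z _
    by_cases h1 : Covers F N x z <;> by_cases h2 : z ≤ y <;> simp [h1, h2]
  have e2 : ∑ z : X F N,
      ((φ:ℂ) * (c ^ (d:ℤ) * (if Covers F N z x then 1 else 0))) * (if z ≤ y then 1 else 0)
      = (φ:ℂ) * c ^ (d:ℤ) *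
        ((Finset.univ.filter fun z : X F N => z ≤ y ∧ Covers F N z x).card : ℂ) := by
    rw [← Finset.sum_boole, Finset.mul_sum]
    apply Finset.sum_congr rfl
    intro z _
    by_cases h1 : Covers F N z x <;> by_cases h2 : z ≤ y <;> simp [h1, h2] <;> ring
  have e3 : ∑ z : X F N,
      ((((φ:ℂ) - 1) / (c - 1)) * (if x = z then c ^ (d:ℤ) else 0)) * (if z ≤ y then 1 else 0)
      = (((φ:ℂ) - 1) / (c - 1)) * (if x ≤ y then c ^ (d:ℤ) else 0) := by
    have : ∀ z : X F N,
        ((((φ:ℂ) - 1) / (c - 1)) * (if x = z then c ^ (d:ℤ) else 0)) * (if z ≤ y then 1 else 0)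
        = if x = z then (((φ:ℂ) - 1) / (c - 1)) * (if z ≤ y then c ^ (d:ℤ) else 0) else 0 := by
      intro z
      by_cases h1 : x = z <;> by_cases h2 : z ≤ y <;> simp [h1, h2]
    rw [Finset.sum_congr rfl fun z _ => this z, Finset.sum_ite_eq]
    simp
  have hLHS : A.mulVec (dd F N y) x
      = ((Finset.univ.filter fun z : X F N => z ≤ y ∧ Covers F N x z).card : ℂ)
        + (φ:ℂ) * c ^ (d:ℤ) *
          ((Finset.univ.filter fun z : X F N => z ≤ y ∧ Covers F N z x).card : ℂ)
        + (((φ:ℂ) - 1) / (c - 1)) * (if x ≤ y then c ^ (d:ℤ) else 0) := by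
    rw [hmv]
    simp only [hA, st18_dd_apply, add_mul]
    rw [Finset.sum_add_distrib, Finset.sum_add_distrib, e1, e2, e3]
  have hRHS : ((((φ : ℂ) * c ^ m - c ^ (N - m)) / (c - 1)) • dd F N y +
        ∑ z ∈ Finset.univ.filter (fun z : X F N => Covers F N z y), dd F N z) x
      = (((φ : ℂ) * c ^ m - c ^ (N - m)) / (c - 1)) * (if x ≤ y then 1 else 0)
        + ((Finset.univ.filter fun z : X F N => Covers F N z y ∧ x ≤ z).card : ℂ) := by
    simp only [Pi.add_apply, Pi.smul_apply, smul_eq_mul, Finset.sum_apply, st18_dd_apply]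
    congr 1
    rw [Finset.sum_boole, Finset.filter_filter]
  rw [hLHS]
  rw [show (((φ : ℂ) * q ^ (dimS F N y) - q ^ (N - dimS F N y)) / (q - 1)) • dd F N y +
        ∑ z ∈ Finset.univ.filter (fun z : X F N => Covers F N z y), dd F N z =
      (((φ : ℂ) * c ^ m - c ^ (N - m)) / (c - 1)) • dd F N y +
        ∑ z ∈ Finset.univ.filter (fun z : X F N => Covers F N z y), dd F N z from rfl, hRHS]
  by_cases hxy : x ≤ y
  · -- main case
    have hdm : d ≤ m := st18_dimS_le F N hxy
    have hmN : m ≤ N := st18_dimS_le_N F N y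
    have hq1' : (1:ℕ) ≤ Fintype.card F := le_of_lt hq2
    -- first count : hyperplanes of x
    have hfil1 : (Finset.univ.filter fun z : X F N => z ≤ y ∧ Covers F N x z)
        = (Finset.univ.filter fun z : X F N => z ≤ x ∧ dimS F N z + 1 = dimS F N x) := by
      ext z
      simp only [Finset.mem_filter, Finset.mem_univ, true_and]
      simp only [Covers]
      constructor
      · rintro ⟨hzy, hzx, hdz⟩; exact ⟨hzx, hdz.symm⟩
      · rintro ⟨hzx, hdz⟩; exact ⟨le_trans hzx hxy, hzx, hdz.symm⟩
    have c1n := st18_card_hyperplanes F N x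
    rw [← hfil1] at c1n
    have c1 : ((Finset.univ.filter fun z : X F N => z ≤ y ∧ Covers F N x z).card : ℂ)
        * (c - 1) = c ^ d - 1 := by
      have := congrArg (Nat.cast (R := ℂ)) c1n
      push_cast [Nat.cast_sub hq1', Nat.cast_sub (Nat.one_le_pow _ _ (lt_of_lt_of_le one_pos hq1'))]
        at this
      exact this
    -- second count
    have hfil2 : (Finset.univ.filter fun z : X F N => z ≤ y ∧ Covers F N z x)
        = (Finset.univ.filter fun z : X F N =>
            x ≤ z ∧ z ≤ y ∧ dimS F N z = dimS F N x + 1) := by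
      ext z
      simp only [Finset.mem_filter, Finset.mem_univ, true_and]
      simp only [Covers]
      tauto
    have c2n := st18_card_one_step F N hxy
    rw [← hfil2] at c2n
    have c2 : ((Finset.univ.filter fun z : X F N => z ≤ y ∧ Covers F N z x).card : ℂ)
        * (c ^ (d+1) - c ^ d) = c ^ m - c ^ d := by
      have := congrArg (Nat.cast (R := ℂ)) c2n
      push_cast [Nat.cast_sub (show Fintype.card F ^ dimS F N x ≤ Fintype.card F ^ (dimS F N x + 1) from Nat.pow_le_pow_right hq1' (Nat.le_succ d)),
        Nat.cast_sub (show Fintype.card F ^ dimS F N x ≤ Fintype.card F ^ dimS F N y from Nat.pow_le_pow_right hq1' hdm)] at this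
      exact this
    -- third count
    have hfil3 : (Finset.univ.filter fun z : X F N => Covers F N z y ∧ x ≤ z)
        = (Finset.univ.filter fun z : X F N =>
            y ≤ z ∧ z ≤ (⊤ : X F N) ∧ dimS F N z = dimS F N y + 1) := by
      ext z
      simp only [Finset.mem_filter, Finset.mem_univ, true_and]
      simp only [Covers, le_top, true_and]
      constructor
      · rintro ⟨⟨hyz, hdz⟩, hxz⟩; exact ⟨hyz, hdz⟩
      · rintro ⟨hyz, hdz⟩; exact ⟨⟨hyz, hdz⟩, le_trans hxy hyz⟩
    have c3n := st18_card_one_step F N (le_top : y ≤ (⊤ : X F N))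
    rw [← hfil3, st18_dimS_top] at c3n
    have c3 : ((Finset.univ.filter fun z : X F N => Covers F N z y ∧ x ≤ z).card : ℂ)
        * (c ^ (m+1) - c ^ m) = c ^ N - c ^ m := by
      have := congrArg (Nat.cast (R := ℂ)) c3n
      push_cast [Nat.cast_sub (show Fintype.card F ^ dimS F N y ≤ Fintype.card F ^ (dimS F N y + 1) from Nat.pow_le_pow_right hq1' (Nat.le_succ m)),
        Nat.cast_sub (show Fintype.card F ^ dimS F N y ≤ Fintype.card F ^ N from Nat.pow_le_pow_right hq1' hmN)] at this
      exact this
    -- final scalar computation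
    have hcd0 : c ^ d ≠ 0 := pow_ne_zero _ hq0
    have hcm0 : c ^ m ≠ 0 := pow_ne_zero _ hq0
    have hfac2 : c ^ (d+1) - c ^ d = c ^ d * (c - 1) := by rw [pow_succ]; ring
    have hfac3 : c ^ (m+1) - c ^ m = c ^ m * (c - 1) := by rw [pow_succ]; ring
    rw [hfac2] at c2
    rw [hfac3] at c3
    have hden2 : c ^ d * (c - 1) ≠ 0 := mul_ne_zero hcd0 hq1
    have hden3 : c ^ m * (c - 1) ≠ 0 := mul_ne_zero hcm0 hq1
    have v1 : ((Finset.univ.filter fun z : X F N => z ≤ y ∧ Covers F N x z).card : ℂ)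
        = (c ^ d - 1) / (c - 1) := by rw [eq_div_iff hq1]; exact c1
    have v2 : ((Finset.univ.filter fun z : X F N => z ≤ y ∧ Covers F N z x).card : ℂ)
        = (c ^ m - c ^ d) / (c ^ d * (c - 1)) := by rw [eq_div_iff hden2]; exact c2
    have v3 : ((Finset.univ.filter fun z : X F N => Covers F N z y ∧ x ≤ z).card : ℂ)
        = (c ^ N - c ^ m) / (c ^ m * (c - 1)) := by rw [eq_div_iff hden3]; exact c3
    have vNm : c ^ (N - m) = c ^ N / c ^ m := by
      rw [eq_div_iff hcm0, ← pow_add, Nat.sub_add_cancel hmN]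
    rw [v1, v2, v3, vNm, if_pos hxy, if_pos hxy, zpow_natCast]
    field_simp
    ring
  · -- degenerate case
    have h2 : (Finset.univ.filter fun z : X F N => z ≤ y ∧ Covers F N z x) = ∅ := by
      ext z
      simp only [Finset.mem_filter, Finset.mem_univ, true_and, Finset.notMem_empty,
        iff_false]
      simp only [Covers]
      rintro ⟨hzy, hxz, -⟩
      exact hxy (le_trans hxz hzy)
    rw [h2, st18_case2 F N hxy, if_neg hxy, if_neg hxy]
    simp

end
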